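/- arXiv:2407.03694 — 4 statements merged into one kernel-verified Lean document; each statement's English description precedes it below -/
import Mathlib

section
/- For any z ∈ ℝ and any f ∈ L²(ℝ, ℂ), the sequence f_n(s) = f(s)/(z-s) · χ_{(z-1/n, z+1/n)^c}(s) satisfies: each f_n is in the domain of X (i.e. x·f_n(x) ∈ L²), and (z - X)f_n → f in L² as n → ∞. Hence the range of z - X is dense in L²(ℝ, ℂ). -/
open MeasureTheory Filter Topology
open scoped ENNReal NNReal

theorem range_z_sub_X_dense (z : ℝ) (f : ℝ → ℂ) (hf : MemLp f 2 (volume : Measure ℝ))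
    (fn : ℕ → ℝ → ℂ)
    (hfn : ∀ n s, fn n s =
      if s ∈ Set.Ioo (z - 1 / n) (z + 1 / n) then 0 else f s / ((z : ℂ) - s)) :
    (∀ n : ℕ, 1 ≤ n → MemLp (fun s : ℝ => (s : ℂ) * fn n s) 2 (volume : Measure ℝ)) ∧
    Tendsto (fun n : ℕ =>
        eLpNorm (fun s : ℝ => ((z : ℂ) - s) * fn n s - f s) 2 (volume : Measure ℝ))
      atTop (𝓝 0) ∧
    ∀ δ : ℝ, 0 < δ → ∃ h : ℝ → ℂ, MemLp (fun s : ℝ => (s : ℂ) * h s) 2 (volume : Measure ℝ) ∧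
      eLpNorm (fun s : ℝ => ((z : ℂ) - s) * h s - f s) 2 (volume : Measure ℝ) <
        ENNReal.ofReal δ := by
  -- basic measurability of `fn n`
  have hinv : AEStronglyMeasurable (fun s : ℝ => ((z : ℂ) - s)⁻¹) volume :=
    ((Complex.measurable_ofReal.const_sub _).inv).aestronglyMeasurable
  have hg : AEStronglyMeasurable (fun s : ℝ => f s / ((z : ℂ) - s)) volume := by
    rw [show (fun s : ℝ => f s / ((z : ℂ) - s)) = f * fun s : ℝ => ((z : ℂ) - s)⁻¹ from by
      funext s; simp [div_eq_mul_inv]]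
    exact hf.1.mul hinv
  have hfn_meas : ∀ n : ℕ, AEStronglyMeasurable (fn n) volume := by
    intro n
    have : fn n = (Set.Ioo (z - 1 / n) (z + 1 / n))ᶜ.indicator
        (fun s => f s / ((z : ℂ) - s)) := by
      funext s
      rw [hfn n s, Set.indicator_apply]
      by_cases hs : s ∈ Set.Ioo (z - 1 / n) (z + 1 / n)
      · rw [if_pos hs, if_neg (by simpa using hs)]
      · rw [if_neg hs, if_pos (by simpa using hs)]
    rw [this]
    exact hg.indicator measurableSet_Ioo.compl
  -- |fn n s| is dominated pointwise
  have key_mem : ∀ n : ℕ, 1 ≤ n → MemLp (fun s : ℝ => (s : ℂ) * fn n s) 2 volume := by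
    intro n hn
    have hnpos : (0 : ℝ) < 1 / n := by positivity
    refine hf.of_le_mul (c := |z| * n + 1) ?_ ?_
    · exact (Complex.continuous_ofReal.aestronglyMeasurable).mul (hfn_meas n)
    · filter_upwards with s
      rw [hfn n s]
      by_cases hs : s ∈ Set.Ioo (z - 1 / n) (z + 1 / n)
      · simp only [hs, if_true, mul_zero, norm_zero]
        positivity
      · simp only [hs, if_false]
        have hzs : z ≠ s := by
          intro h
          apply hs
          rw [← h]
          constructor <;> linarith
        have hzsC : (z : ℂ) - s ≠ 0 := by
          simpa [sub_eq_zero] using fun h => hzs (Complex.ofReal_injective h)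
        have hdist : 1 / (n : ℝ) ≤ |z - s| := by
          rcases abs_cases (z - s) with ⟨h1, h2⟩ | ⟨h1, h2⟩
          · rw [h1]
            simp only [Set.mem_Ioo, not_and_or, not_lt] at hs
            rcases hs with h | h <;> linarith
          · rw [h1]
            simp only [Set.mem_Ioo, not_and_or, not_lt] at hs
            rcases hs with h | h <;> linarith
        have habs : ‖(z : ℂ) - s‖ = |z - s| := by
          rw [← Complex.ofReal_sub, Complex.norm_real, Real.norm_eq_abs]
        -- s * (f s / (z - s)) = z * (f s / (z-s)) - f s
        have : (s : ℂ) * (f s / ((z : ℂ) - s)) =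
            (z : ℂ) * (f s / ((z : ℂ) - s)) - f s := by
          field_simp
          ring
        rw [this]
        calc ‖(z : ℂ) * (f s / ((z : ℂ) - s)) - f s‖
            ≤ ‖(z : ℂ) * (f s / ((z : ℂ) - s))‖ + ‖f s‖ := norm_sub_le _ _
          _ ≤ |z| * (n * ‖f s‖) + ‖f s‖ := by
              gcongr
              rw [norm_mul, norm_div, habs, Complex.norm_real, Real.norm_eq_abs]
              have hzspos : (0 : ℝ) < |z - s| := lt_of_lt_of_le hnpos hdist
              have hb : ‖f s‖ / |z - s| ≤ (n : ℝ) * ‖f s‖ := by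
                rw [div_le_iff₀ hzspos]
                calc ‖f s‖ = ‖f s‖ * 1 := (mul_one _).symm
                  _ ≤ ‖f s‖ * ((n : ℝ) * |z - s|) := by
                      have h1n : (1 : ℝ) ≤ (n : ℝ) * |z - s| := by
                        rw [← div_le_iff₀' (by positivity : (0:ℝ) < (n:ℝ))]
                        simpa using hdist
                      nlinarith [norm_nonneg (f s)]
                  _ = (n : ℝ) * ‖f s‖ * |z - s| := by ring
              exact mul_le_mul_of_nonneg_left hb (abs_nonneg z)
          _ = (|z| * n + 1) * ‖f s‖ := by ring
  have h2 : Tendsto (fun n : ℕ =>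
      eLpNorm (fun s : ℝ => ((z : ℂ) - s) * fn n s - f s) 2 (volume : Measure ℝ))
      atTop (𝓝 0) := by
    -- difference equals (a.e.) indicator of the shrinking interval
    have hdiff : ∀ n : ℕ, 1 ≤ n →
        (fun s : ℝ => ((z : ℂ) - s) * fn n s - f s) =
          fun s => -((Set.Ioo (z - 1 / n) (z + 1 / n)).indicator f s) := by
      intro n hn
      have hnpos : (0 : ℝ) < 1 / n := by positivity
      funext s
      rw [hfn n s, Set.indicator_apply]
      by_cases hs : s ∈ Set.Ioo (z - 1 / n) (z + 1 / n)
      · rw [if_pos hs, if_pos hs]; simp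
      · have hzs : z ≠ s := by
          intro h
          apply hs
          rw [← h]
          constructor <;> linarith
        have hzsC : (z : ℂ) - s ≠ 0 := by
          simpa [sub_eq_zero] using fun h => hzs (Complex.ofReal_injective h)
        rw [if_neg hs, if_neg hs, mul_div_cancel₀ _ hzsC]
        simp
    -- measure with density ‖f‖²
    set μ' : Measure ℝ := volume.withDensity (fun s => (‖f s‖₊ : ℝ≥0∞) ^ (2 : ℝ)) with hμ'
    have hE : ∀ n : ℕ, 1 ≤ n →
        eLpNorm (fun s : ℝ => ((z : ℂ) - s) * fn n s - f s) 2 volume =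
          (μ' (Set.Ioo (z - 1 / n) (z + 1 / n))) ^ (1 / (2 : ℝ)) := by
      intro n hn
      rw [hdiff n hn]
      have hneg : (fun s : ℝ => -((Set.Ioo (z - 1 / n) (z + 1 / n)).indicator f s)) =
          -((Set.Ioo (z - 1 / n) (z + 1 / n)).indicator f) := rfl
      rw [hneg, eLpNorm_neg, eLpNorm_indicator_eq_eLpNorm_restrict measurableSet_Ioo,
        eLpNorm_eq_lintegral_rpow_enorm_toReal (by norm_num) (by norm_num), hμ',
        withDensity_apply _ measurableSet_Ioo]
      norm_num [enorm_eq_nnnorm]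
    -- μ' of the shrinking intervals tends to 0
    have hμ'fin : μ' Set.univ ≠ ∞ := by
      rw [hμ', withDensity_apply _ MeasurableSet.univ, Measure.restrict_univ]
      have h := lintegral_rpow_enorm_lt_top_of_eLpNorm_lt_top (f := f)
        (μ := volume) (by norm_num) (by norm_num) hf.2
      norm_num at h ⊢
      exact h.ne
    have htend : Tendsto (fun n : ℕ =>
        μ' (Set.Ioo (z - 1 / (n + 1 : ℕ)) (z + 1 / (n + 1 : ℕ)))) atTop (𝓝 0) := by
      have hmono : Antitone (fun n : ℕ =>
          Set.Ioo (z - 1 / (n + 1 : ℕ)) (z + 1 / (n + 1 : ℕ))) := by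
        intro m k hmk
        apply Set.Ioo_subset_Ioo
        · have : (1 : ℝ) / (k + 1 : ℕ) ≤ 1 / (m + 1 : ℕ) := by
            apply one_div_le_one_div_of_le (by positivity)
            exact_mod_cast Nat.succ_le_succ hmk
          linarith
        · have : (1 : ℝ) / (k + 1 : ℕ) ≤ 1 / (m + 1 : ℕ) := by
            apply one_div_le_one_div_of_le (by positivity)
            exact_mod_cast Nat.succ_le_succ hmk
          linarith
      have hInter : (⋂ n : ℕ, Set.Ioo (z - 1 / (n + 1 : ℕ)) (z + 1 / (n + 1 : ℕ))) ⊆ {z} := by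
        intro s hs
        simp only [Set.mem_iInter, Set.mem_Ioo] at hs
        simp only [Set.mem_singleton_iff]
        by_contra hne
        have hpos : 0 < |s - z| := by
          rw [abs_pos, sub_ne_zero]; exact hne
        obtain ⟨n, hn⟩ := exists_nat_one_div_lt hpos
        have hsn := hs n
        push_cast at hsn hn
        rcases abs_cases (s - z) with ⟨h1, _⟩ | ⟨h1, _⟩ <;> rw [h1] at hn <;>
          [linarith [hsn.2]; linarith [hsn.1]]
      have hz0 : μ' {z} = 0 :=
        withDensity_absolutelyContinuous volume _ (measure_singleton z)
      have hInter0 : μ' (⋂ n : ℕ, Set.Ioo (z - 1 / (n + 1 : ℕ)) (z + 1 / (n + 1 : ℕ))) = 0 :=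
        measure_mono_null hInter hz0
      have := tendsto_measure_iInter_atTop (μ := μ')
        (s := fun n : ℕ => Set.Ioo (z - 1 / (n + 1 : ℕ)) (z + 1 / (n + 1 : ℕ)))
        (fun n => measurableSet_Ioo.nullMeasurableSet) hmono
        ⟨0, ((measure_mono (Set.subset_univ _)).trans_lt
          (lt_top_iff_ne_top.2 hμ'fin)).ne⟩
      rw [hInter0] at this
      exact this
    rw [← tendsto_add_atTop_iff_nat 1]
    have heq : (fun n : ℕ =>
        eLpNorm (fun s : ℝ => ((z : ℂ) - s) * fn (n + 1) s - f s) 2 volume) =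
        fun n : ℕ => (μ' (Set.Ioo (z - 1 / (n + 1 : ℕ)) (z + 1 / (n + 1 : ℕ)))) ^ (1 / (2 : ℝ)) := by
      funext n
      exact hE (n + 1) (Nat.le_add_left 1 n)
    rw [heq]
    have := (ENNReal.continuous_rpow_const (y := 1 / (2 : ℝ))).tendsto 0
    have hcomp := this.comp htend
    rwa [ENNReal.zero_rpow_of_pos (by norm_num)] at hcomp
  refine ⟨key_mem, h2, ?_⟩
  intro δ hδ
  have hev : ∀ᶠ n : ℕ in atTop,
      eLpNorm (fun s : ℝ => ((z : ℂ) - s) * fn n s - f s) 2 volume < ENNReal.ofReal δ :=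
    h2.eventually_lt_const (ENNReal.ofReal_pos.2 hδ)
  obtain ⟨n, hn1, hn2⟩ := (hev.and (eventually_ge_atTop 1)).exists
  exact ⟨fn n, key_mem n hn2, hn1⟩
end

section
/- For z ∈ ℝ and ε > 0, the function g_ε(s) = ε^{1/2} π^{-1/4} e^{-ε²s²/2} e^{i(sz - s²/2)} satisfies: ‖g_ε‖ = 1, ∫_ℝ s²|g_ε(s)|² ds = 1/(2ε²), and ‖(z - (X+P))g_ε‖² = ε²/2. In particular ‖(z - (X+P))g_ε‖ < ε, so g_ε is an approximate eigenvector of X + P for the value z. -/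
open MeasureTheory Real Filter

lemma tendsto_mul_exp_neg_mul_sq_atTop {b : ℝ} (hb : 0 < b) :
    Tendsto (fun x : ℝ => x * Real.exp (-b * x ^ 2)) atTop (nhds 0) := by
  have hlin : Tendsto (fun x : ℝ => -(1 / 2) * x) atTop atBot := by
    have h0 : Tendsto (fun x : ℝ => (1 / 2 : ℝ) * x) atTop atTop :=
      tendsto_id.const_mul_atTop (by norm_num)
    exact (tendsto_neg_atTop_atBot.comp h0).congr fun x => (neg_mul _ _).symm
  have h := (rpow_mul_exp_neg_mul_sq_isLittleO_exp_neg hb 1).trans_tendsto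
    (Real.tendsto_exp_atBot.comp hlin)
  refine h.congr' ?_
  filter_upwards [eventually_gt_atTop (0 : ℝ)] with x hx
  rw [Real.rpow_one]

lemma integral_sq_mul_exp_neg_mul_sq {b : ℝ} (hb : 0 < b) :
    ∫ x : ℝ, x ^ 2 * Real.exp (-b * x ^ 2) = Real.sqrt (π / b) / (2 * b) := by
  have hint2 : Integrable fun x : ℝ => x ^ 2 * Real.exp (-b * x ^ 2) := by
    have := integrable_rpow_mul_exp_neg_mul_sq hb (s := 2) (by norm_num)
    simpa [Real.rpow_natCast] using this
  have hint1 : Integrable fun x : ℝ => Real.exp (-b * x ^ 2) := integrable_exp_neg_mul_sq hb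
  have hderiv : ∀ x : ℝ, HasDerivAt (fun x : ℝ => x * Real.exp (-b * x ^ 2))
      (Real.exp (-b * x ^ 2) - 2 * b * (x ^ 2 * Real.exp (-b * x ^ 2))) x := by
    intro x
    have h1 : HasDerivAt (fun x : ℝ => -b * x ^ 2) (-b * (2 * x)) x := by
      simpa using (hasDerivAt_pow 2 x).const_mul (-b)
    have h2 := (hasDerivAt_id x).mul h1.exp
    simp only [Pi.mul_def, id_eq] at h2
    refine h2.congr_deriv ?_
    ring
  have hint : Integrable fun x : ℝ =>
      Real.exp (-b * x ^ 2) - 2 * b * (x ^ 2 * Real.exp (-b * x ^ 2)) :=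
    hint1.sub (hint2.const_mul _)
  have htop := tendsto_mul_exp_neg_mul_sq_atTop hb
  have hbot : Tendsto (fun x : ℝ => x * Real.exp (-b * x ^ 2)) atBot (nhds 0) := by
    have h := (htop.comp tendsto_neg_atBot_atTop).neg
    simpa [Function.comp, neg_mul, neg_sq] using h
  have key := integral_of_hasDerivAt_of_tendsto hderiv hint hbot htop
  rw [sub_zero] at key
  rw [integral_sub hint1 (hint2.const_mul _), integral_const_mul, integral_gaussian] at key
  have h2b : (2 : ℝ) * b ≠ 0 := by positivity
  field_simp at key ⊢
  linarith [key]

theorem approx_eigenvector_X_add_P (z ε : ℝ) (hε : 0 < ε)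
    (g : ℝ → ℂ)
    (hg : ∀ s : ℝ, g s = (ε ^ ((1 : ℝ) / 2) : ℝ) * ((π ^ (-(1 : ℝ) / 4) : ℝ) : ℂ) *
        Complex.exp (-(ε : ℂ) ^ 2 * s ^ 2 / 2) *
        Complex.exp (Complex.I * (s * z - s ^ 2 / 2))) :
    (∫ s : ℝ, ‖g s‖ ^ 2) = 1 ∧
    (∫ s : ℝ, s ^ 2 * ‖g s‖ ^ 2) = 1 / (2 * ε ^ 2) ∧
    (∫ s : ℝ, ‖((z : ℂ) - s) * g s + Complex.I * deriv g s‖ ^ 2) = ε ^ 2 / 2 ∧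
    Real.sqrt (∫ s : ℝ, ‖((z : ℂ) - s) * g s + Complex.I * deriv g s‖ ^ 2) < ε := by
  have hπ : (0:ℝ) < π := Real.pi_pos
  have hsqπ : (0:ℝ) < Real.sqrt π := Real.sqrt_pos.mpr hπ
  have hb : (0:ℝ) < ε ^ 2 := by positivity
  -- pointwise norm squared
  have hnorm : ∀ s : ℝ, ‖g s‖ ^ 2 = (ε / Real.sqrt π) * Real.exp (-(ε^2) * s^2) := by
    intro s
    rw [hg s]
    have h1 : -(ε : ℂ) ^ 2 * (s:ℂ) ^ 2 / 2 = ((-(ε^2) * s^2 / 2 : ℝ) : ℂ) := by push_cast; ring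
    have h2 : Complex.I * ((s:ℂ) * z - (s:ℂ)^2/2) = ((s*z - s^2/2 : ℝ) : ℂ) * Complex.I := by
      push_cast; ring
    rw [h1, h2, norm_mul, norm_mul, norm_mul, Complex.norm_real, Complex.norm_real,
      ← Complex.ofReal_exp, Complex.norm_real,
      Complex.norm_exp_ofReal_mul_I, mul_one, Real.norm_eq_abs, Real.norm_eq_abs,
      Real.norm_eq_abs, abs_of_nonneg (Real.rpow_nonneg hε.le _),
      abs_of_nonneg (Real.rpow_nonneg hπ.le _), abs_of_nonneg (Real.exp_pos _).le,
      mul_pow, mul_pow]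
    rw [← Real.rpow_natCast (ε ^ ((1:ℝ)/2)) 2, ← Real.rpow_mul hε.le,
      ← Real.rpow_natCast (π ^ (-(1:ℝ)/4)) 2, ← Real.rpow_mul hπ.le]
    norm_num
    rw [Real.rpow_neg hπ.le, sq, ← Real.exp_add, Real.sqrt_eq_rpow]
    rw [div_eq_mul_inv]
    congr 1
    ring
  have hgauss : (∫ s : ℝ, Real.exp (-(ε^2) * s^2)) = Real.sqrt π / ε := by
    rw [integral_gaussian, Real.sqrt_div hπ.le, Real.sqrt_sq hε.le]
  have h1int : (∫ s : ℝ, ‖g s‖ ^ 2) = 1 := by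
    simp only [hnorm]
    rw [integral_const_mul, hgauss]
    field_simp
  have h2int : (∫ s : ℝ, s ^ 2 * ‖g s‖ ^ 2) = 1 / (2 * ε ^ 2) := by
    simp only [hnorm]
    have heq : (fun s : ℝ => s ^ 2 * ((ε / Real.sqrt π) * Real.exp (-(ε^2) * s^2)))
        = fun s : ℝ => (ε / Real.sqrt π) * (s ^ 2 * Real.exp (-(ε^2) * s^2)) := by
      funext s; ring
    rw [heq, integral_const_mul, integral_sq_mul_exp_neg_mul_sq hb,
      Real.sqrt_div hπ.le, Real.sqrt_sq hε.le]
    field_simp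
  -- derivative
  have hgF : g = fun s : ℝ => (((ε ^ ((1:ℝ)/2) : ℝ) : ℂ) * ((π ^ (-(1:ℝ)/4) : ℝ) : ℂ)) *
      Complex.exp (((-(ε:ℂ)^2 - Complex.I)/2) * (s:ℂ)^2 + (Complex.I * z) * (s:ℂ)) := by
    funext s
    rw [hg s, mul_assoc, ← Complex.exp_add]
    congr 1
    congr 1
    ring
  have hder : ∀ s : ℝ, HasDerivAt g (g s * ((-(ε:ℂ)^2 - Complex.I) * s + Complex.I * z)) s := by
    intro s
    have h1 : HasDerivAt (fun w : ℂ => ((-(ε:ℂ)^2 - Complex.I)/2) * w^2 + (Complex.I * z) * w)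
        ((-(ε:ℂ)^2 - Complex.I) * (s:ℂ) + Complex.I * z) (s:ℂ) := by
      have h := ((hasDerivAt_pow 2 ((s:ℝ):ℂ)).const_mul ((-(ε:ℂ)^2 - Complex.I)/2)).add
        ((hasDerivAt_id ((s:ℝ):ℂ)).const_mul (Complex.I * (z:ℂ)))
      refine h.congr_deriv ?_
      simp [id_eq]
      ring
    have h2 := (h1.cexp.const_mul
      (((ε ^ ((1:ℝ)/2) : ℝ) : ℂ) * ((π ^ (-(1:ℝ)/4) : ℝ) : ℂ))).comp_ofReal
    rw [hgF]
    convert h2 using 1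
    ring
  have hpt : ∀ s : ℝ, ((z:ℂ) - s) * g s + Complex.I * deriv g s
      = (-Complex.I) * ((ε^2 * s : ℝ) : ℂ) * g s := by
    intro s
    rw [(hder s).deriv]
    push_cast
    linear_combination (g s * ((z:ℂ) - (s:ℂ))) * Complex.I_sq
  have h3 : (∫ s : ℝ, ‖((z:ℂ) - s) * g s + Complex.I * deriv g s‖ ^ 2) = ε^2/2 := by
    have heq : (fun s : ℝ => ‖((z:ℂ) - s) * g s + Complex.I * deriv g s‖ ^ 2)
        = fun s : ℝ => (ε^2)^2 * (s^2 * ‖g s‖^2) := by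
      funext s
      rw [hpt s, norm_mul, norm_mul, norm_neg, Complex.norm_I, one_mul, Complex.norm_real,
        Real.norm_eq_abs, mul_pow, sq_abs, mul_pow]
      ring
    rw [heq, integral_const_mul, h2int]
    field_simp
  refine ⟨h1int, h2int, h3, ?_⟩
  rw [h3]
  calc Real.sqrt (ε^2/2) < Real.sqrt (ε^2) :=
        Real.sqrt_lt_sqrt (by positivity) (by nlinarith)
    _ = ε := Real.sqrt_sq hε.le
end

section
/- For all real t, (1/(2π^{3/2})) · ∫_ℝ e^{itx} (∫_ℝ e^{-(1+i)s²/2} e^{ixs} ds)(∫_ℝ e^{-(1-i)w²/2} e^{-ixw} dw) dx = e^{-t²/2}. -/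
open MeasureTheory Real
open Complex

lemma rpow_half_sq {a : ℝ} (ha : 0 ≤ a) : (a ^ (1/2:ℝ))^2 = a := by
  rw [← Real.rpow_natCast (a ^ (1/2:ℝ)) 2, ← Real.rpow_mul ha]; norm_num

lemma const_eval :
    ((π:ℂ)/((1+I)/2))^((1:ℂ)/2) * ((π:ℂ)/((1-I)/2))^((1:ℂ)/2) * ((π:ℂ)/(1/2))^((1:ℂ)/2)
      = 2 * (π:ℂ) ^ ((3:ℂ)/2) := by
  have hI1 : (1 + I : ℂ) ≠ 0 := by
    intro h; have := congrArg Complex.im h; simp at this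
  have hI2 : (1 - I : ℂ) ≠ 0 := by
    intro h; have := congrArg Complex.im h; simp at this
  have e1 : (π:ℂ)/((1+I)/2) = (π:ℂ)*(1-I) := by
    field_simp
    ring_nf
    rw [I_sq]; ring
  have e2 : (π:ℂ)/((1-I)/2) = (π:ℂ)*(1+I) := by
    field_simp
    ring_nf
    rw [I_sq]; ring
  have e3 : (π:ℂ)/(1/2) = ((2*π:ℝ):ℂ) := by push_cast; ring
  rw [e1, e2, e3]
  set x : ℂ := (π:ℂ)*(1-I) with hx
  have hxne : x ≠ 0 := by
    apply mul_ne_zero _ hI2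
    exact_mod_cast Real.pi_ne_zero
  have hargx : x.arg ≠ π := by
    rw [Ne, Complex.arg_eq_pi_iff]
    rintro ⟨h1, -⟩
    have : x.re = π := by simp [hx, Complex.mul_re]
    rw [this] at h1; linarith [Real.pi_pos]
  have hconj : (π:ℂ)*(1+I) = (starRingEnd ℂ) x := by
    simp [hx, map_mul, Complex.conj_ofReal]
  have hhalf : (starRingEnd ℂ) ((1:ℂ)/2) = (1:ℂ)/2 := by
    simp [Complex.ext_iff]
  have huv : x ^ ((1:ℂ)/2) * ((π:ℂ)*(1+I)) ^ ((1:ℂ)/2) = ((π * Real.sqrt 2 : ℝ) : ℂ) := by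
    rw [hconj, Complex.conj_cpow _ _ hargx, hhalf, Complex.mul_conj]
    rw [← Complex.sq_norm]
    have habs : ‖x ^ ((1:ℂ)/2)‖ = ‖x‖ ^ (1/2:ℝ) := by
      rw [Complex.norm_cpow_of_ne_zero hxne]
      simp
    rw [habs]
    have : ‖x‖ = π * Real.sqrt 2 := by
      rw [hx, norm_mul, Complex.norm_real, Real.norm_of_nonneg Real.pi_pos.le]
      congr 1
      rw [Complex.norm_def]
      norm_num [Complex.normSq_apply]
    rw [this, rpow_half_sq (by positivity)]
  rw [huv]
  have h12 : ((1:ℂ)/2) = ((1/2:ℝ):ℂ) := by norm_num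
  have h32 : ((3:ℂ)/2) = ((3/2:ℝ):ℂ) := by norm_num
  rw [h12, h32, ← Complex.ofReal_cpow (by positivity) (1/2),
    ← Complex.ofReal_cpow Real.pi_pos.le (3/2), ← Complex.ofReal_mul,
    show (2:ℂ) = ((2:ℝ):ℂ) from by norm_num, ← Complex.ofReal_mul]
  norm_cast
  rw [Real.mul_rpow (by norm_num) Real.pi_pos.le, Real.sqrt_eq_rpow]
  have ha : (2:ℝ)^(1/2:ℝ) * 2^(1/2:ℝ) = 2 := by
    rw [← Real.rpow_add (by norm_num)]; norm_num
  have hb : π * π^(1/2:ℝ) = π^(3/2:ℝ) := by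
    nth_rewrite 1 [← Real.rpow_one π]
    rw [← Real.rpow_add Real.pi_pos]; norm_num
  calc π * 2 ^ (1/2:ℝ) * (2 ^ (1/2:ℝ) * π ^ (1/2:ℝ))
      = ((2:ℝ) ^ (1/2:ℝ) * 2 ^ (1/2:ℝ)) * (π * π ^ (1/2:ℝ)) := by ring
    _ = 2 * π^(3/2:ℝ) := by rw [ha, hb]

theorem vacuum_char_X_add_P (t : ℝ) :
    (1 / (2 * (π : ℂ) ^ ((3 : ℂ) / 2))) *
      ∫ x : ℝ, Complex.exp (Complex.I * t * x) *
        (∫ s : ℝ, Complex.exp (-(1 + Complex.I) * s ^ 2 / 2) * Complex.exp (Complex.I * x * s)) *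
        (∫ w : ℝ, Complex.exp (-(1 - Complex.I) * w ^ 2 / 2) * Complex.exp (-Complex.I * x * w)) =
      Complex.exp (-(t : ℂ) ^ 2 / 2) := by
  have hI1 : (1 + I : ℂ) ≠ 0 := by intro h; have := congrArg Complex.im h; simp at this
  have hI2 : (1 - I : ℂ) ≠ 0 := by intro h; have := congrArg Complex.im h; simp at this
  set c1 : ℂ := ((π:ℂ)/((1+I)/2))^((1:ℂ)/2) with hc1
  set c2 : ℂ := ((π:ℂ)/((1-I)/2))^((1:ℂ)/2) with hc2
  have h1 : ∀ x : ℝ, (∫ s : ℝ, Complex.exp (-(1 + I) * s ^ 2 / 2) * Complex.exp (I * x * s))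
      = c1 * Complex.exp (-(x:ℂ)^2 / (4 * ((1+I)/2))) := by
    intro x
    have hfun : (fun s : ℝ => Complex.exp (-(1 + I) * s ^ 2 / 2) * Complex.exp (I * x * s))
        = fun s : ℝ => Complex.exp (I * (x:ℂ) * s) * Complex.exp (-((1+I)/2) * s ^ 2) := by
      funext s; rw [mul_comm]; congr 2 <;> ring
    rw [hfun, fourierIntegral_gaussian (by norm_num) (x:ℂ)]
  have h2 : ∀ x : ℝ, (∫ w : ℝ, Complex.exp (-(1 - I) * w ^ 2 / 2) * Complex.exp (-I * x * w))
      = c2 * Complex.exp (-(x:ℂ)^2 / (4 * ((1-I)/2))) := by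
    intro x
    have hfun : (fun w : ℝ => Complex.exp (-(1 - I) * w ^ 2 / 2) * Complex.exp (-I * x * w))
        = fun w : ℝ => Complex.exp (I * (-(x:ℂ)) * w) * Complex.exp (-((1-I)/2) * w ^ 2) := by
      funext w; rw [mul_comm]; congr 2 <;> ring
    rw [hfun, fourierIntegral_gaussian (by norm_num) (-(x:ℂ))]
    congr 2; ring
  have key : (fun x : ℝ => Complex.exp (I * t * x) *
        (∫ s : ℝ, Complex.exp (-(1 + I) * s ^ 2 / 2) * Complex.exp (I * x * s)) *
        (∫ w : ℝ, Complex.exp (-(1 - I) * w ^ 2 / 2) * Complex.exp (-I * x * w)))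
      = fun x : ℝ => (c1 * c2) *
          (Complex.exp (I * (t:ℂ) * x) * Complex.exp (-(1/2 : ℂ) * x ^ 2)) := by
    funext x
    rw [h1 x, h2 x]
    have hexp : Complex.exp (-(x:ℂ)^2 / (4 * ((1+I)/2))) *
        Complex.exp (-(x:ℂ)^2 / (4 * ((1-I)/2))) = Complex.exp (-(1/2 : ℂ) * x ^ 2) := by
      rw [← Complex.exp_add]
      congr 1
      field_simp
      ring_nf
      rw [I_sq]
      ring
    calc Complex.exp (I * t * x) * (c1 * Complex.exp (-(x:ℂ)^2 / (4 * ((1+I)/2)))) *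
          (c2 * Complex.exp (-(x:ℂ)^2 / (4 * ((1-I)/2))))
        = (c1 * c2) * (Complex.exp (I * (t:ℂ) * x) *
            (Complex.exp (-(x:ℂ)^2 / (4 * ((1+I)/2))) *
             Complex.exp (-(x:ℂ)^2 / (4 * ((1-I)/2))))) := by ring
      _ = _ := by rw [hexp]
  rw [key, MeasureTheory.integral_const_mul,
    fourierIntegral_gaussian (by norm_num : (0:ℝ) < ((1:ℂ)/2).re) (t:ℂ)]
  have harg : -(t:ℂ)^2 / (4 * (1/2)) = -(t:ℂ)^2 / 2 := by norm_num
  rw [harg]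
  have hC : c1 * c2 * ((π:ℂ)/(1/2))^((1:ℂ)/2) = 2 * (π:ℂ) ^ ((3:ℂ)/2) := const_eval
  rw [show ((π:ℂ)/(1/2)) = (π:ℂ)*2 from by ring] at hC ⊢
  have hne : (2 * (π:ℂ) ^ ((3:ℂ)/2)) ≠ 0 := by
    apply mul_ne_zero two_ne_zero
    intro h
    rw [Complex.cpow_eq_zero_iff] at h
    exact (Complex.ofReal_ne_zero.2 Real.pi_ne_zero) h.1
  rw [one_div, inv_mul_eq_iff_eq_mul₀ hne, mul_comm (2 * (π:ℂ) ^ ((3:ℂ)/2))]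
  calc c1 * c2 * (((π:ℂ)*2)^((1:ℂ)/2) * Complex.exp (-(t:ℂ)^2/2))
      = (c1 * c2 * ((π:ℂ)*2)^((1:ℂ)/2)) * Complex.exp (-(t:ℂ)^2/2) := by ring
    _ = Complex.exp (-(t:ℂ)^2/2) * (2 * (π:ℂ) ^ ((3:ℂ)/2)) := by rw [hC]; ring
end

section
/- For z ∈ ℝ and ε > 0, define g_ε(s) = Γ(0, 2ε²)^{-1/2} · e^{(-1/2 + iz/2)·ln|s|} · e^{-s²} for |s| ≥ ε and g_ε(s) = 0 for |s| < ε, where Γ(0, b) = ∫_b^∞ t^{-1} e^{-t} dt. Then ‖g_ε‖ = 1 and ‖(z - (XP+PX))g_ε‖ = 2·Γ(0, 2ε²)^{-1/2}·e^{-ε²}·√(1 + 2ε²), which tends to 0 as ε → 0⁺ (since Γ(0, 2ε²) → ∞). Hence every real z is an approximate eigenvalue of XP + PX. -/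
open MeasureTheory Real Filter Topology

/-- The upper incomplete Gamma function at the first argument `0`:
`Γ(0, b) = ∫_b^∞ t⁻¹ e^{-t} dt`. -/
noncomputable def incGamma0 (b : ℝ) : ℝ := ∫ t in Set.Ioi b, t⁻¹ * Real.exp (-t)

lemma incGamma0_integrable {b : ℝ} (hb : 0 < b) :
    IntegrableOn (fun t : ℝ => t⁻¹ * Real.exp (-t)) (Set.Ioi b) := by
  have hexp : IntegrableOn (fun t : ℝ => b⁻¹ * Real.exp (-1 * t)) (Set.Ioi b) :=
    (exp_neg_integrableOn_Ioi b one_pos).const_mul _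
  refine Integrable.mono' hexp ?_ ?_
  · exact ((measurable_inv.mul (by fun_prop)).aestronglyMeasurable)
  · filter_upwards [ae_restrict_mem measurableSet_Ioi] with t ht
    have h0 : 0 < t := hb.trans ht
    rw [norm_mul, norm_inv, Real.norm_eq_abs, Real.norm_eq_abs, abs_of_pos h0,
      abs_of_pos (Real.exp_pos _), neg_one_mul]
    gcongr
    exact ht.le

lemma incGamma0_pos {b : ℝ} (hb : 0 < b) : 0 < incGamma0 b := by
  rw [incGamma0]
  rw [setIntegral_pos_iff_support_of_nonneg_ae
    (by filter_upwards [ae_restrict_mem measurableSet_Ioi] with t ht;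
        have h0 : 0 < t := hb.trans ht; positivity)
    (incGamma0_integrable hb)]
  have : Set.Ioi b ⊆ (Function.support fun t : ℝ => t⁻¹ * Real.exp (-t)) ∩ Set.Ioi b := by
    intro t ht
    refine ⟨?_, ht⟩
    have h0 : 0 < t := hb.trans ht
    simp only [Function.mem_support]
    positivity
  calc (0:ENNReal) < volume (Set.Ioi b) := by simp
      _ ≤ _ := measure_mono this

lemma incGamma0_lower {b : ℝ} (hb : 0 < b) (hb1 : b ≤ 1) :
    (Real.exp 1)⁻¹ * (-Real.log b) ≤ incGamma0 b := by
  have hIcc : IntegrableOn (fun t : ℝ => t⁻¹ * Real.exp (-1)) (Set.Ioc b 1) := by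
    have hco : ContinuousOn (fun t : ℝ => t⁻¹ * Real.exp (-1)) (Set.Icc b 1) :=
      ContinuousOn.mul (continuousOn_inv₀.mono (fun x hx =>
        Set.mem_compl_singleton_iff.2 (ne_of_gt (hb.trans_le hx.1)))) continuousOn_const
    exact hco.integrableOn_Icc.mono_set Set.Ioc_subset_Icc_self
  have hIcc2 : IntegrableOn (fun t : ℝ => t⁻¹ * Real.exp (-t)) (Set.Ioc b 1) :=
    (incGamma0_integrable hb).mono_set Set.Ioc_subset_Ioi_self
  have step1 : ∫ t in Set.Ioc b 1, t⁻¹ * Real.exp (-t) ≤ incGamma0 b := by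
    rw [incGamma0]
    refine setIntegral_mono_set (incGamma0_integrable hb) ?_ ?_
    · filter_upwards [ae_restrict_mem measurableSet_Ioi] with t ht
      have h0 : 0 < t := hb.trans ht
      positivity
    · exact HasSubset.Subset.eventuallyLE Set.Ioc_subset_Ioi_self
  have step2 : ∫ t in Set.Ioc b 1, t⁻¹ * Real.exp (-1) ≤ ∫ t in Set.Ioc b 1, t⁻¹ * Real.exp (-t) := by
    refine setIntegral_mono_on hIcc hIcc2 measurableSet_Ioc ?_
    intro t ht
    have h0 : 0 < t := hb.trans ht.1
    have : Real.exp (-1) ≤ Real.exp (-t) := Real.exp_le_exp.2 (by linarith [ht.2])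
    have h1 : 0 ≤ t⁻¹ := by positivity
    exact mul_le_mul_of_nonneg_left this h1
  have step3 : ∫ t in Set.Ioc b 1, t⁻¹ * Real.exp (-1) = Real.exp (-1) * (-Real.log b) := by
    rw [← intervalIntegral.integral_of_le hb1]
    rw [intervalIntegral.integral_mul_const, integral_inv]
    · rw [one_div, Real.log_inv]; ring
    · rw [Set.uIcc_of_le hb1]
      intro h; exact absurd h.1 (not_le.2 hb)
  calc (Real.exp 1)⁻¹ * (-Real.log b) = Real.exp (-1) * (-Real.log b) := by
        rw [Real.exp_neg]
    _ = ∫ t in Set.Ioc b 1, t⁻¹ * Real.exp (-1) := step3.symm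
    _ ≤ _ := step2.trans step1

lemma sq_tendsto : Tendsto (fun ε : ℝ => 2 * ε ^ 2) (𝓝[>] 0) (𝓝[>] 0) := by
  rw [tendsto_nhdsWithin_iff]
  constructor
  · have : Tendsto (fun ε : ℝ => 2 * ε ^ 2) (𝓝 0) (𝓝 (2 * 0 ^ 2)) :=
      (continuous_const.mul (continuous_pow 2)).tendsto 0
    simpa using this.mono_left nhdsWithin_le_nhds
  · filter_upwards [self_mem_nhdsWithin] with ε (hε : 0 < ε)
    exact Set.mem_Ioi.2 (by positivity)

lemma incGamma0_tendsto : Tendsto (fun ε : ℝ => incGamma0 (2 * ε ^ 2)) (𝓝[>] 0) atTop := by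
  have h1 : Tendsto (fun b : ℝ => (Real.exp 1)⁻¹ * (-Real.log b)) (𝓝[>] 0) atTop := by
    refine Tendsto.const_mul_atTop (by positivity) ?_
    exact tendsto_neg_atBot_atTop.comp Real.tendsto_log_nhdsGT_zero
  have h2 : Tendsto (fun ε : ℝ => (Real.exp 1)⁻¹ * (-Real.log (2 * ε ^ 2))) (𝓝[>] 0) atTop :=
    h1.comp sq_tendsto
  refine tendsto_atTop_mono' _ ?_ h2
  have hmem : Set.Ioc (0:ℝ) 1 ∈ 𝓝[>] (0:ℝ) := Ioc_mem_nhdsGT_of_mem (by norm_num)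
  filter_upwards [sq_tendsto.eventually_mem hmem] with ε hε
  exact incGamma0_lower hε.1 hε.2

lemma sqrt_tendsto_atTop : Tendsto Real.sqrt atTop atTop := by
  refine tendsto_atTop_atTop_of_monotone (fun a b hab => Real.sqrt_le_sqrt hab) ?_
  intro b; exact ⟨(max b 0) ^ 2, by rw [Real.sqrt_sq (le_max_right b 0)]; exact le_max_left _ _⟩

lemma final_tendsto : Tendsto (fun ε : ℝ =>
      2 * (Real.sqrt (incGamma0 (2 * ε ^ 2)))⁻¹ * Real.exp (-ε ^ 2) *
        Real.sqrt (1 + 2 * ε ^ 2)) (𝓝[>] 0) (𝓝 0) := by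
  have h1 : Tendsto (fun ε : ℝ => (Real.sqrt (incGamma0 (2 * ε ^ 2)))⁻¹) (𝓝[>] 0) (𝓝 0) :=
    Tendsto.inv_tendsto_atTop (sqrt_tendsto_atTop.comp incGamma0_tendsto)
  have h2 : Tendsto (fun ε : ℝ => Real.exp (-ε ^ 2)) (𝓝[>] 0) (𝓝 1) := by
    have : Tendsto (fun ε : ℝ => Real.exp (-ε ^ 2)) (𝓝 0) (𝓝 (Real.exp (-(0:ℝ) ^ 2))) :=
      (Real.continuous_exp.comp ((continuous_pow 2).neg)).tendsto 0
    simpa using this.mono_left nhdsWithin_le_nhds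
  have h3 : Tendsto (fun ε : ℝ => Real.sqrt (1 + 2 * ε ^ 2)) (𝓝[>] 0) (𝓝 1) := by
    have : Tendsto (fun ε : ℝ => Real.sqrt (1 + 2 * ε ^ 2)) (𝓝 0)
        (𝓝 (Real.sqrt (1 + 2 * (0:ℝ) ^ 2))) :=
      (Real.continuous_sqrt.comp (continuous_const.add (continuous_const.mul (continuous_pow 2)))).tendsto 0
    have h10 : Real.sqrt (1 + 2 * (0:ℝ) ^ 2) = 1 := by norm_num
    rw [h10] at this
    exact this.mono_left nhdsWithin_le_nhds
  have := ((h1.const_mul 2).mul h2).mul h3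
  simpa using this

lemma two_sq_tendsto_atTop : Tendsto (fun t : ℝ => 2 * t ^ 2) atTop atTop :=
  (tendsto_pow_atTop two_ne_zero).const_mul_atTop two_pos

lemma integral_inv_exp_sq {ε : ℝ} (hε : 0 < ε) :
    ∫ t in Set.Ioi ε, t⁻¹ * Real.exp (-(2 * t ^ 2)) = incGamma0 (2 * ε ^ 2) / 2 := by
  set gg : ℝ → ℝ := fun u => u⁻¹ * Real.exp (-u) / 2 with hgg
  have hb : (0:ℝ) < 2 * ε ^ 2 := by positivity
  have himg1 : (fun t : ℝ => 2 * t ^ 2) '' Set.Ioi ε ⊆ Set.Ioi 0 := by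
    rintro _ ⟨x, hx, rfl⟩
    have : 0 < x := hε.trans hx
    exact Set.mem_Ioi.2 (by positivity)
  have himg2 : (fun t : ℝ => 2 * t ^ 2) '' Set.Ici ε ⊆ Set.Ici (2 * ε ^ 2) := by
    rintro _ ⟨x, hx, rfl⟩
    simp only [Set.mem_Ici] at hx ⊢
    nlinarith [hε.le]
  have key := integral_comp_mul_deriv_Ioi (f := fun t : ℝ => 2 * t ^ 2)
    (f' := fun t : ℝ => 4 * t) (g := gg) (a := ε)
    ((continuous_const.mul (continuous_pow 2)).continuousOn)
    two_sq_tendsto_atTop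
    (fun x _ => by
      have h := ((hasDerivAt_pow 2 x).const_mul 2).hasDerivWithinAt (s := Set.Ioi x)
      refine h.congr_deriv ?_; norm_num; ring)
    (by
      refine ContinuousOn.mono ?_ himg1
      exact (ContinuousOn.mul (continuousOn_inv₀.mono (fun x hx =>
          Set.mem_compl_singleton_iff.2 (ne_of_gt hx)))
        (Real.continuous_exp.comp continuous_neg).continuousOn).div_const 2)
    (by
      refine IntegrableOn.mono_set ?_ himg2
      rw [integrableOn_Ici_iff_integrableOn_Ioi]
      exact (incGamma0_integrable hb).div_const 2)
    (by
      have hbound : IntegrableOn (fun x : ℝ => ε⁻¹ * Real.exp (-(2 * x ^ 2))) (Set.Ici ε) := by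
        have := (integrable_exp_neg_mul_sq (by norm_num : (0:ℝ) < 2)).const_mul ε⁻¹
        refine (this.integrableOn).congr_fun (fun x _ => by ring_nf) measurableSet_Ici
      refine Integrable.mono' hbound ?_ ?_
      · simp only [Function.comp, hgg]
        have m1 : Measurable fun x : ℝ => (2 * x ^ 2)⁻¹ * Real.exp (-(2 * x ^ 2)) / 2 :=
          (((measurable_const.mul (measurable_id.pow_const 2)).inv).mul
            ((measurable_const.mul (measurable_id.pow_const 2)).neg.exp)).div_const 2
        exact (m1.mul ((measurable_id.const_mul 4))).aestronglyMeasurable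
      · filter_upwards [ae_restrict_mem measurableSet_Ici] with x hx
        have hx0 : 0 < x := hε.trans_le hx
        have h1 : ((2 * x ^ 2)⁻¹ * Real.exp (-(2 * x ^ 2)) / 2) * (4 * x)
            = x⁻¹ * Real.exp (-(2 * x ^ 2)) := by
          field_simp
          ring
        simp only [Function.comp, hgg]
        rw [h1, Real.norm_eq_abs, abs_of_nonneg (by positivity)]
        gcongr
        exact hx)
  have hLHS : ∫ x in Set.Ioi ε, (gg ∘ fun t : ℝ => 2 * t ^ 2) x * (4 * x)
      = ∫ t in Set.Ioi ε, t⁻¹ * Real.exp (-(2 * t ^ 2)) := by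
    refine setIntegral_congr_fun measurableSet_Ioi (fun x hx => ?_)
    have hx0 : 0 < x := hε.trans hx
    simp only [Function.comp, hgg]
    field_simp
    ring
  rw [hLHS] at key
  rw [key, incGamma0, ← integral_div]

lemma integrableOn_cube_exp {ε : ℝ} (hε : 0 < ε) :
    IntegrableOn (fun t : ℝ => t ^ 3 * Real.exp (-(2 * t ^ 2))) (Set.Ioi ε) := by
  have main : IntegrableOn (fun x : ℝ => x ^ (3:ℝ) * Real.exp (-2 * x ^ 2)) (Set.Ioi 0) :=
    integrableOn_rpow_mul_exp_neg_mul_sq (by norm_num) (by norm_num)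
  have h2 : IntegrableOn (fun x : ℝ => x ^ (3:ℝ) * Real.exp (-2 * x ^ 2)) (Set.Ioi ε) :=
    main.mono_set (Set.Ioi_subset_Ioi hε.le)
  refine h2.congr_fun (fun x hx => ?_) measurableSet_Ioi
  have hx0 : 0 ≤ x := (hε.trans hx).le
  rw [← Real.rpow_natCast x 3]
  norm_num

lemma integral_cube_exp_sq {ε : ℝ} (hε : 0 < ε) :
    ∫ t in Set.Ioi ε, t ^ 3 * Real.exp (-(2 * t ^ 2))
      = (2 * ε ^ 2 + 1) / 8 * Real.exp (-(2 * ε ^ 2)) := by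
  set F0 : ℝ → ℝ := fun t => -((2 * t ^ 2 + 1) / 8) * Real.exp (-(2 * t ^ 2)) with hF0
  have hderiv : ∀ x ∈ Set.Ici ε, HasDerivAt F0 (x ^ 3 * Real.exp (-(2 * x ^ 2))) x := by
    intro x _
    have h1 : HasDerivAt (fun t : ℝ => -((2 * t ^ 2 + 1) / 8)) (-(4 * x / 8)) x := by
      have := (((hasDerivAt_pow 2 x).const_mul 2).add_const 1).div_const 8 |>.neg
      refine this.congr_deriv ?_; norm_num; ring
    have h2 : HasDerivAt (fun t : ℝ => Real.exp (-(2 * t ^ 2)))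
        (Real.exp (-(2 * x ^ 2)) * (-(4 * x))) x := by
      have hin : HasDerivAt (fun t : ℝ => -(2 * t ^ 2)) (-(4 * x)) x := by
        have := ((hasDerivAt_pow 2 x).const_mul 2).neg
        refine this.congr_deriv ?_; norm_num; ring
      exact hin.exp
    have := h1.mul h2
    refine this.congr_deriv ?_
    ring
  have htends : Tendsto F0 atTop (𝓝 0) := by
    have ha : Tendsto (fun x : ℝ => x * Real.exp (-x)) atTop (𝓝 0) := by
      simpa using Real.tendsto_pow_mul_exp_neg_atTop_nhds_zero 1
    have hc := ha.comp two_sq_tendsto_atTop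
    have hd := Real.tendsto_exp_neg_atTop_nhds_zero.comp two_sq_tendsto_atTop
    have := ((hc.add hd).const_mul (-(1/8) : ℝ))
    have heq : ∀ t : ℝ, (-(1/8) : ℝ) * ((fun x => x * Real.exp (-x)) (2 * t ^ 2)
        + (fun x => Real.exp (-x)) (2 * t ^ 2)) = F0 t := by
      intro t; simp only [hF0]; ring
    have h0 : (-(1/8) : ℝ) * ((0:ℝ) + 0) = 0 := by ring
    rw [h0] at this
    exact Tendsto.congr heq this
  have := integral_Ioi_of_hasDerivAt_of_tendsto' hderiv (integrableOn_cube_exp hε) htends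
  rw [this, hF0]
  ring

lemma norm_g_sq_aux {C : ℝ} (hC : 0 ≤ C) (z s : ℝ) (hs : s ≠ 0) :
    ‖(C : ℂ) * Complex.exp ((-(1 : ℂ) / 2 + Complex.I * z / 2) * (Real.log |s| : ℂ)) *
        (Real.exp (-s ^ 2) : ℂ)‖ ^ 2
      = C ^ 2 * (|s|⁻¹ * Real.exp (-(2 * s ^ 2))) := by
  have habs : (0:ℝ) < |s| := abs_pos.2 hs
  set L := Real.log |s| with hL
  have hexp : (-(1 : ℂ) / 2 + Complex.I * z / 2) * (L : ℂ)
      = ((-(L/2) : ℝ) : ℂ) + ((z * L / 2 : ℝ) : ℂ) * Complex.I := by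
    push_cast; ring
  have hre : ((-(1 : ℂ) / 2 + Complex.I * z / 2) * (L : ℂ)).re = -(L/2) := by
    rw [hexp]; simp
  rw [norm_mul, norm_mul, Complex.norm_real, Complex.norm_real, Complex.norm_exp, hre,
    Real.norm_eq_abs, Real.norm_eq_abs, abs_of_nonneg hC, abs_of_nonneg (Real.exp_nonneg _)]
  rw [mul_pow, mul_pow]
  have e1 : Real.exp (-(L/2)) ^ 2 = |s|⁻¹ := by
    rw [sq, ← Real.exp_add]
    have : -(L/2) + -(L/2) = -L := by ring
    rw [this, Real.exp_neg, hL, Real.exp_log habs]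
  have e2 : Real.exp (-s ^ 2) ^ 2 = Real.exp (-(2 * s ^ 2)) := by
    rw [sq, ← Real.exp_add]; ring_nf
  rw [e1, e2, mul_assoc]

noncomputable def phi (C : ℝ) (u : ℂ) (s : ℝ) : ℂ :=
  (C : ℂ) * Complex.exp (u * (Real.log s : ℂ)) * Complex.exp (-(s : ℂ) ^ 2)

lemma phi_hasDerivAt (C : ℝ) (u : ℂ) {s : ℝ} (hs : s ≠ 0) :
    HasDerivAt (phi C u) (phi C u s * (u * (s : ℂ)⁻¹ - 2 * s)) s := by
  have h1 : HasDerivAt (fun x : ℝ => ((Real.log x : ℝ) : ℂ)) ((s⁻¹ : ℝ) : ℂ) s :=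
    (Real.hasDerivAt_log hs).ofReal_comp
  have h2 : HasDerivAt (fun x : ℝ => Complex.exp (u * (Real.log x : ℂ)))
      (Complex.exp (u * (Real.log s : ℂ)) * (u * ((s⁻¹ : ℝ) : ℂ))) s :=
    (h1.const_mul u).cexp
  have h3a : HasDerivAt (fun x : ℝ => ((x : ℝ) : ℂ)) 1 s := by
    simpa using (hasDerivAt_id s).ofReal_comp
  have h3b : HasDerivAt (fun x : ℝ => -((x : ℂ)) ^ 2) (-(2 * s)) s := by
    have h : HasDerivAt (fun x : ℝ => -(((x : ℂ)) * ((x : ℂ)))) _ s := (h3a.mul h3a).neg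
    have hfun : (fun x : ℝ => -(((x : ℂ)) * ((x : ℂ)))) = fun x : ℝ => -((x : ℂ)) ^ 2 := by
      funext x; ring
    rw [hfun] at h
    convert h using 1
    ring
  have h3 : HasDerivAt (fun x : ℝ => Complex.exp (-(x : ℂ) ^ 2))
      (Complex.exp (-(s : ℂ) ^ 2) * (-(2 * s))) s := by
    have := h3b.cexp
    convert this using 2 <;> ring
  have h4 : HasDerivAt (fun x : ℝ => (C : ℂ) * (Complex.exp (u * (Real.log x : ℂ)) *
      Complex.exp (-(x : ℂ) ^ 2))) _ s := (h2.mul h3).const_mul (C : ℂ)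
  have heq : (fun x : ℝ => (C : ℂ) * (Complex.exp (u * (Real.log x : ℂ)) *
      Complex.exp (-(x : ℂ) ^ 2))) = phi C u := by
    funext x; rw [phi]; ring
  rw [heq] at h4
  convert h4 using 1
  rw [phi]
  have hsc : ((s : ℂ)) ≠ 0 := Complex.ofReal_ne_zero.2 hs
  push_cast
  field_simp
  ring

noncomputable def uz (z : ℝ) : ℂ := -(1:ℂ)/2 + Complex.I * z / 2

lemma key_alg (z s : ℝ) (P : ℂ) (hs : s ≠ 0) :
    (z : ℂ) * P + Complex.I * (2 * s * (P * (uz z * (s:ℂ)⁻¹ - 2 * s)) + P)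
      = -4 * Complex.I * (s:ℂ)^2 * P := by
  have hsc : ((s:ℂ)) ≠ 0 := Complex.ofReal_ne_zero.2 hs
  rw [uz]
  field_simp
  ring_nf
  simp [Complex.I_sq]

lemma hnorm4 (s : ℝ) (X : ℂ) : ‖-4 * Complex.I * (s:ℂ)^2 * X‖^2 = 16 * s^4 * ‖X‖^2 := by
  rw [norm_mul, norm_mul, norm_mul]
  simp only [Complex.norm_I, norm_pow, Complex.norm_real, Real.norm_eq_abs]
  have h4 : ‖(-4 : ℂ)‖ = 4 := by
    rw [norm_neg]
    simpa using Complex.norm_ofNat 4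
  rw [h4, mul_one]
  rw [show (|s|:ℝ)^2 = s^2 from sq_abs s]
  ring

lemma profile_integral {ε : ℝ} (hε : 0 < ε) (q : ℝ → ℝ) :
    ∫ t in Set.Ioi (0:ℝ), (if ε ≤ t then q t else 0) = ∫ t in Set.Ioi ε, q t := by
  have h : (fun t : ℝ => if ε ≤ t then q t else 0) = (Set.Ici ε).indicator q := by
    funext t; rw [Set.indicator_apply]; simp [Set.mem_Ici]
  have hsub : Set.Ici ε ⊆ Set.Ioi 0 := fun x hx => lt_of_lt_of_le hε hx
  rw [h, setIntegral_indicator measurableSet_Ici,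
    Set.inter_eq_self_of_subset_right hsub, integral_Ici_eq_integral_Ioi]

lemma integral_norm_g (z ε : ℝ) (hε : 0 < ε) (C : ℝ) (hC : 0 ≤ C) (g1 : ℝ → ℂ)
    (hg1 : ∀ s, g1 s = if ε ≤ |s| then
        (C : ℂ) * Complex.exp ((-(1 : ℂ) / 2 + Complex.I * z / 2) * (Real.log |s| : ℂ)) *
          (Real.exp (-s ^ 2) : ℂ) else 0) :
    ∫ s : ℝ, ‖g1 s‖ ^ 2 = C ^ 2 * incGamma0 (2 * ε ^ 2) := by
  set P1 : ℝ → ℝ := fun t => if ε ≤ t then C ^ 2 * (t⁻¹ * Real.exp (-(2 * t ^ 2))) else 0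
    with hP1
  have heq : ∀ s : ℝ, ‖g1 s‖ ^ 2 = P1 |s| := by
    intro s
    rw [hg1, hP1]
    by_cases h : ε ≤ |s|
    · have hs0 : s ≠ 0 := by intro h0; rw [h0, abs_zero] at h; linarith
      simp only [if_pos h]
      rw [sq_abs, norm_g_sq_aux hC z s hs0]
    · simp only [if_neg h, norm_zero]
      exact zero_pow two_ne_zero
  have hcomp : ∫ s : ℝ, P1 |s| = 2 * ∫ t in Set.Ioi (0:ℝ), P1 t := integral_comp_abs
  have hprof : ∫ t in Set.Ioi (0:ℝ), P1 t
      = ∫ t in Set.Ioi ε, C ^ 2 * (t⁻¹ * Real.exp (-(2 * t ^ 2))) := by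
    rw [hP1]; exact profile_integral hε _
  rw [integral_congr_ae (Eventually.of_forall heq), hcomp, hprof,
    integral_const_mul, integral_inv_exp_sq hε]
  ring

lemma integral_norm_op (z ε : ℝ) (hε : 0 < ε) (C : ℝ) (hC : 0 ≤ C) (g1 : ℝ → ℂ)
    (hg1 : ∀ s, g1 s = if ε ≤ |s| then
        (C : ℂ) * Complex.exp ((-(1 : ℂ) / 2 + Complex.I * z / 2) * (Real.log |s| : ℂ)) *
          (Real.exp (-s ^ 2) : ℂ) else 0) :
    ∫ s : ℝ, ‖(z : ℂ) * g1 s + Complex.I * (2 * s * deriv g1 s + g1 s)‖ ^ 2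
      = 4 * C ^ 2 * (2 * ε ^ 2 + 1) * Real.exp (-(2 * ε ^ 2)) := by
  have hgphi : ∀ x : ℝ, ε ≤ |x| → g1 x = phi C (uz z) x := by
    intro x hx
    rw [hg1, if_pos hx]
    simp only [phi, uz]
    rw [Real.log_abs, Complex.ofReal_exp]
    push_cast
    ring
  have hd : ∀ s : ℝ, ε < |s| →
      deriv g1 s = phi C (uz z) s * (uz z * (s : ℂ)⁻¹ - 2 * s) := by
    intro s hslt
    have hs0 : s ≠ 0 := by intro h0; rw [h0, abs_zero] at hslt; linarith
    have hmem : {x : ℝ | ε < |x|} ∈ 𝓝 s :=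
      (isOpen_lt continuous_const continuous_abs).mem_nhds hslt
    have hev : g1 =ᶠ[𝓝 s] phi C (uz z) :=
      eventually_of_mem hmem (fun x hx => hgphi x (le_of_lt hx))
    exact ((phi_hasDerivAt C (uz z) hs0).congr_of_eventuallyEq hev).deriv
  set P2 : ℝ → ℝ := fun t => if ε ≤ t then 16 * C ^ 2 * (t ^ 3 * Real.exp (-(2 * t ^ 2))) else 0
    with hP2
  have hae : ∀ᵐ s : ℝ,
      ‖(z : ℂ) * g1 s + Complex.I * (2 * s * deriv g1 s + g1 s)‖ ^ 2 = P2 |s| := by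
    have hne : ∀ᵐ s : ℝ, |s| ≠ ε := by
      have hcnt : volume ({ε, -ε} : Set ℝ) = 0 :=
        ((Set.finite_singleton (-ε)).insert ε).countable.measure_zero _
      refine (ae_iff).2 (measure_mono_null ?_ hcnt)
      intro s hs
      simp only [Set.mem_setOf_eq, not_not] at hs
      rcases (abs_eq hε.le).1 hs with h | h
      · exact Set.mem_insert_iff.2 (Or.inl h)
      · exact Set.mem_insert_iff.2 (Or.inr (Set.mem_singleton_iff.2 h))
    filter_upwards [hne] with s hsne
    rcases hsne.lt_or_gt with hlt | hgt
    · have hmem : {x : ℝ | |x| < ε} ∈ 𝓝 s :=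
        (isOpen_lt continuous_abs continuous_const).mem_nhds hlt
      have hev : g1 =ᶠ[𝓝 s] (fun _ => (0 : ℂ)) :=
        eventually_of_mem hmem (fun x hx => by rw [hg1, if_neg (not_le.2 hx)])
      have hd0 : deriv g1 s = 0 := by rw [hev.deriv_eq]; exact deriv_const s 0
      have hg0 : g1 s = 0 := by rw [hg1, if_neg (not_le.2 hlt)]
      rw [hd0, hg0, hP2]
      simp only [if_neg (not_le.2 hlt)]
      simp
    · have hs0 : s ≠ 0 := by
        intro h0; rw [h0, abs_zero] at hgt; linarith
      rw [hd s hgt, ← hgphi s hgt.le, key_alg z s (g1 s) hs0, hnorm4]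
      rw [hg1, if_pos hgt.le, norm_g_sq_aux hC z s hs0, hP2]
      simp only [if_pos hgt.le]
      rw [sq_abs]
      have h4 : s ^ 4 = |s| ^ 4 := by
        rw [← abs_pow]
        exact (abs_of_nonneg (by positivity)).symm
      rw [h4]
      have habs0 : |s| ≠ 0 := ne_of_gt (abs_pos.2 hs0)
      field_simp
  have hcomp : ∫ s : ℝ, P2 |s| = 2 * ∫ t in Set.Ioi (0:ℝ), P2 t := integral_comp_abs
  have hprof : ∫ t in Set.Ioi (0:ℝ), P2 t
      = ∫ t in Set.Ioi ε, 16 * C ^ 2 * (t ^ 3 * Real.exp (-(2 * t ^ 2))) := by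
    rw [hP2]; exact profile_integral hε _
  rw [integral_congr_ae hae, hcomp, hprof, integral_const_mul, integral_cube_exp_sq hε]
  ring

theorem approx_eigenvector_XP_add_PX (z : ℝ)
    (g : ℝ → ℝ → ℂ)
    (hg : ∀ ε s, g ε s =
      if ε ≤ |s| then
        ((Real.sqrt (incGamma0 (2 * ε ^ 2)))⁻¹ : ℝ) *
          Complex.exp ((-(1 : ℂ) / 2 + Complex.I * z / 2) * Real.log |s|) *
          Real.exp (-s ^ 2)
      else 0) :
    (∀ ε : ℝ, 0 < ε →
      Real.sqrt (∫ s : ℝ, ‖g ε s‖ ^ 2) = 1 ∧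
      Real.sqrt (∫ s : ℝ,
          ‖(z : ℂ) * g ε s + Complex.I * (2 * s * deriv (g ε) s + g ε s)‖ ^ 2) =
        2 * (Real.sqrt (incGamma0 (2 * ε ^ 2)))⁻¹ * Real.exp (-ε ^ 2) *
          Real.sqrt (1 + 2 * ε ^ 2)) ∧
    Tendsto (fun ε : ℝ => incGamma0 (2 * ε ^ 2)) (𝓝[>] 0) atTop ∧
    Tendsto (fun ε : ℝ =>
        2 * (Real.sqrt (incGamma0 (2 * ε ^ 2)))⁻¹ * Real.exp (-ε ^ 2) *
          Real.sqrt (1 + 2 * ε ^ 2)) (𝓝[>] 0) (𝓝 0) := by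
  refine ⟨?_, incGamma0_tendsto, final_tendsto⟩
  intro ε hε
  have hΓpos : 0 < incGamma0 (2 * ε ^ 2) := incGamma0_pos (by positivity)
  have hC : 0 ≤ (Real.sqrt (incGamma0 (2 * ε ^ 2)))⁻¹ := by positivity
  constructor
  · rw [integral_norm_g z ε hε _ hC (g ε) (hg ε)]
    rw [inv_pow, Real.sq_sqrt hΓpos.le, inv_mul_cancel₀ hΓpos.ne', Real.sqrt_one]
  · rw [integral_norm_op z ε hε _ hC (g ε) (hg ε)]
    have key : 4 * ((Real.sqrt (incGamma0 (2 * ε ^ 2)))⁻¹) ^ 2 * (2 * ε ^ 2 + 1) *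
        Real.exp (-(2 * ε ^ 2))
        = (2 * (Real.sqrt (incGamma0 (2 * ε ^ 2)))⁻¹ * Real.exp (-ε ^ 2) *
            Real.sqrt (1 + 2 * ε ^ 2)) ^ 2 := by
      have h1 : Real.sqrt (1 + 2 * ε ^ 2) ^ 2 = 1 + 2 * ε ^ 2 :=
        Real.sq_sqrt (by positivity)
      have h2 : Real.exp (-ε ^ 2) ^ 2 = Real.exp (-(2 * ε ^ 2)) := by
        rw [sq, ← Real.exp_add]; ring_nf
      rw [mul_pow, mul_pow, mul_pow, h1, h2]
      ring
    rw [key, Real.sqrt_sq (by positivity)]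
end
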